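/- Let f, g ∈ ℤ[t] be monic with gcd(f,g) = 1 in ℚ[t]. Then the ℤ[t]-modules ℤ[t]/(fg) and (ℤ[t]/(f)) ⊕ (ℤ[t]/(g)) are isomorphic if and only if |Res(f,g)| = 1. -/

import Mathlib

/-- The Sylvester-type matrix `A(f,g)` of two integer polynomials: its first
`deg g` columns contain the coefficients of `f, tf, ..., t^{deg g - 1} f` and its last
`deg f` columns contain the coefficients of `g, tg, ..., t^{deg f - 1} g`,
all expressed in the basis `1, t, ..., t^{deg f + deg g - 1}`. -/
noncomputable def sylvesterMatrix (f g : Polynomial ℤ) :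
    Matrix (Fin (f.natDegree + g.natDegree)) (Fin (f.natDegree + g.natDegree)) ℤ :=
  Matrix.of fun i j =>
    if (j : ℕ) < g.natDegree then (Polynomial.X ^ (j : ℕ) * f).coeff (i : ℕ)
    else (Polynomial.X ^ ((j : ℕ) - g.natDegree) * g).coeff (i : ℕ)

/-- The resultant `Res(f,g)` of two integer polynomials, as the determinant of the
Sylvester matrix. -/
noncomputable def res (f g : Polynomial ℤ) : ℤ := (sylvesterMatrix f g).det

open Polynomial Matrix

noncomputable section
namespace SylTest

/-- multiplication by `a` as a map `ℤ[X]/(q) → ℤ[X]/(r)`, given `r ∣ q·a`. -/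
def mulQ (a q r : Polynomial ℤ) (h : r ∣ q * a) :
    (Polynomial ℤ ⧸ Ideal.span {q}) →ₗ[Polynomial ℤ] (Polynomial ℤ ⧸ Ideal.span {r}) :=
  Submodule.mapQ _ _ (LinearMap.toSpanSingleton (Polynomial ℤ) (Polynomial ℤ) a)
    (by
      intro x hx
      simp only [Submodule.mem_comap, LinearMap.toSpanSingleton_apply, smul_eq_mul]
      rw [Ideal.mem_span_singleton] at hx ⊢
      exact h.trans (mul_dvd_mul_right hx a))

lemma mulQ_mk (a q r : Polynomial ℤ) (h : r ∣ q * a) (p : Polynomial ℤ) :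
    mulQ a q r h (Ideal.Quotient.mk _ p) = Ideal.Quotient.mk _ (p * a) := rfl

variable (f g : Polynomial ℤ)

/-- the Sylvester map `(u,v) ↦ uf + vg`. -/
def psi : ((Polynomial ℤ ⧸ Ideal.span {g}) × (Polynomial ℤ ⧸ Ideal.span {f}))
    →ₗ[Polynomial ℤ] (Polynomial ℤ ⧸ Ideal.span {f * g}) :=
  LinearMap.coprod (mulQ f g (f * g) ⟨1, by ring⟩) (mulQ g f (f * g) ⟨1, by ring⟩)

lemma psi_mk (u v : Polynomial ℤ) :
    psi f g (Ideal.Quotient.mk _ u, Ideal.Quotient.mk _ v) =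
      Ideal.Quotient.mk _ (u * f + v * g) := by
  simp [psi, LinearMap.coprod_apply, mulQ_mk, map_add]

variable {f g}

/-- power basis of the domain of `psi`. -/
def Bdom (hf : f.Monic) (hg : g.Monic) : Module.Basis (Fin (f.natDegree + g.natDegree)) ℤ
    ((Polynomial ℤ ⧸ Ideal.span {g}) × (Polynomial ℤ ⧸ Ideal.span {f})) :=
  ((AdjoinRoot.powerBasis' hg).basis.prod (AdjoinRoot.powerBasis' hf).basis).reindex
    (finSumFinEquiv.trans (finCongr (Nat.add_comm _ _)))

/-- power basis of the codomain of `psi`. -/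
def Bcod (hf : f.Monic) (hg : g.Monic) : Module.Basis (Fin (f.natDegree + g.natDegree)) ℤ
    (Polynomial ℤ ⧸ Ideal.span {f * g}) :=
  (AdjoinRoot.powerBasis' (hf.mul hg)).basis.reindex (finCongr (by simp [AdjoinRoot.powerBasis'_dim, hf.natDegree_mul hg]))

lemma Bcod_repr (hf : f.Monic) (hg : g.Monic) (p : Polynomial ℤ) (i : Fin (f.natDegree + g.natDegree)) :
    (Bcod hf hg).repr (Ideal.Quotient.mk _ p) i = (p %ₘ (f * g)).coeff (i : ℕ) := by
  simp [Bcod, Module.Basis.repr_reindex]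
  rfl

lemma mod_eq_self (hf : f.Monic) (hg : g.Monic) {p : Polynomial ℤ} (hd : p.natDegree < f.natDegree + g.natDegree)
    : p %ₘ (f * g) = p := by
  rw [modByMonic_eq_self_iff (hf.mul hg)]
  exact degree_lt_degree (by rwa [hf.natDegree_mul hg])

lemma reindex_helper (hf : f.Monic) (hg : g.Monic) (s : Fin g.natDegree ⊕ Fin f.natDegree) :
    (((AdjoinRoot.powerBasis' hg).basis.prod (AdjoinRoot.powerBasis' hf).basis).reindex
      (finSumFinEquiv.trans (finCongr (Nat.add_comm g.natDegree f.natDegree))))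
      ((finSumFinEquiv.trans (finCongr (Nat.add_comm g.natDegree f.natDegree))) s) =
    ((AdjoinRoot.powerBasis' hg).basis.prod (AdjoinRoot.powerBasis' hf).basis) s := by
  rw [Module.Basis.reindex_apply]; exact congrArg _ (Equiv.symm_apply_apply _ s)

lemma Bdom_apply (hf : f.Monic) (hg : g.Monic) (s : Fin g.natDegree ⊕ Fin f.natDegree) :
    Bdom hf hg ((finSumFinEquiv.trans (finCongr (Nat.add_comm g.natDegree f.natDegree))) s) =
    ((AdjoinRoot.powerBasis' hg).basis.prod (AdjoinRoot.powerBasis' hf).basis) s :=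
  reindex_helper hf hg s

lemma toMatrix_psi (hf : f.Monic) (hg : g.Monic) :
    LinearMap.toMatrix (Bdom hf hg) (Bcod hf hg) ((psi f g).restrictScalars ℤ) =
      sylvesterMatrix f g := by
  ext i j
  rw [LinearMap.toMatrix_apply]
  obtain ⟨s, rfl⟩ : ∃ s, (finSumFinEquiv.trans
      (finCongr (Nat.add_comm g.natDegree f.natDegree))) s = j :=
    ⟨_, Equiv.apply_symm_apply _ j⟩
  rw [Bdom_apply]
  cases s with
  | inl k =>
    have hval : ((finSumFinEquiv.trans (finCongr (Nat.add_comm g.natDegree f.natDegree)))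
        (Sum.inl k) : ℕ) = (k : ℕ) := by simp
    have h1 : ((AdjoinRoot.powerBasis' hg).basis.prod (AdjoinRoot.powerBasis' hf).basis)
        (Sum.inl k) = (AdjoinRoot.mk g (X ^ (k : ℕ)), 0) := by
      apply Prod.ext
      · erw [Module.Basis.prod_apply_inl_fst, (AdjoinRoot.powerBasis' hg).basis_eq_pow]
        simp only [AdjoinRoot.powerBasis'_gen, AdjoinRoot.root]
        rw [← map_pow]
      · exact Module.Basis.prod_apply_inl_snd _ _ _
    erw [h1]
    have h2 : (psi f g).restrictScalars ℤ
        ((AdjoinRoot.mk g (X ^ (k : ℕ)), 0) :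
          (Polynomial ℤ ⧸ Ideal.span {g}) × (Polynomial ℤ ⧸ Ideal.span {f})) =
        Ideal.Quotient.mk _ (X ^ (k : ℕ) * f) := by
      have h0 : ((AdjoinRoot.mk g (X ^ (k : ℕ)), 0) :
          (Polynomial ℤ ⧸ Ideal.span {g}) × (Polynomial ℤ ⧸ Ideal.span {f})) =
          (Ideal.Quotient.mk _ (X ^ (k : ℕ)), Ideal.Quotient.mk _ 0) := by
        refine Prod.ext rfl ?_
        simp
      rw [LinearMap.restrictScalars_apply, h0, psi_mk]
      simp
    erw [h2, Bcod_repr hf hg, mod_eq_self hf hg]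
    · simp only [sylvesterMatrix, Matrix.of_apply, hval]
      rw [if_pos k.isLt]
    · rw [(monic_X_pow _).natDegree_mul hf, natDegree_X_pow]
      omega
  | inr k =>
    have hval : ((finSumFinEquiv.trans (finCongr (Nat.add_comm g.natDegree f.natDegree)))
        (Sum.inr k) : ℕ) = g.natDegree + (k : ℕ) := by simp [Nat.add_comm]
    have h1 : ((AdjoinRoot.powerBasis' hg).basis.prod (AdjoinRoot.powerBasis' hf).basis)
        (Sum.inr k) = (0, AdjoinRoot.mk f (X ^ (k : ℕ))) := by
      apply Prod.ext
      · exact Module.Basis.prod_apply_inr_fst _ _ _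
      · erw [Module.Basis.prod_apply_inr_snd, (AdjoinRoot.powerBasis' hf).basis_eq_pow]
        simp only [AdjoinRoot.powerBasis'_gen, AdjoinRoot.root]
        rw [← map_pow]
    erw [h1]
    have h2 : (psi f g).restrictScalars ℤ
        ((0, AdjoinRoot.mk f (X ^ (k : ℕ))) :
          (Polynomial ℤ ⧸ Ideal.span {g}) × (Polynomial ℤ ⧸ Ideal.span {f})) =
        Ideal.Quotient.mk _ (X ^ (k : ℕ) * g) := by
      have h0 : ((0, AdjoinRoot.mk f (X ^ (k : ℕ))) :
          (Polynomial ℤ ⧸ Ideal.span {g}) × (Polynomial ℤ ⧸ Ideal.span {f})) =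
          (Ideal.Quotient.mk _ 0, Ideal.Quotient.mk _ (X ^ (k : ℕ))) := by
        refine Prod.ext ?_ rfl
        simp
      rw [LinearMap.restrictScalars_apply, h0, psi_mk]
      simp
    erw [h2, Bcod_repr hf hg, mod_eq_self hf hg]
    · simp only [sylvesterMatrix, Matrix.of_apply, hval]
      rw [if_neg (by omega)]
      have hsub : g.natDegree + (k : ℕ) - g.natDegree = (k : ℕ) := by omega
      rw [hsub]
    · rw [(monic_X_pow _).natDegree_mul hg, natDegree_X_pow]
      omega

/-- `z • mk p = mk (C z * p)` in the quotient. -/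
lemma int_smul_mk (I : Ideal (Polynomial ℤ)) (z : ℤ) (p : Polynomial ℤ) :
    z • (Ideal.Quotient.mk I p) = Ideal.Quotient.mk I (C z * p) := by
  have h1 : z • (Ideal.Quotient.mk I p) = (C z) • (Ideal.Quotient.mk I p) := by
    rw [algebra_compatible_smul (Polynomial ℤ) z (Ideal.Quotient.mk I p)]
    norm_num [algebraMap_int_eq, Polynomial.C_eq_intCast]
  rw [h1]
  rfl

lemma psi_eq_zero_iff (hf : f.Monic) (hg : g.Monic)
    (hco : IsCoprime (f.map (Int.castRingHom ℚ)) (g.map (Int.castRingHom ℚ)))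
    (u w : Polynomial ℤ)
    (h : psi f g (Ideal.Quotient.mk _ u, Ideal.Quotient.mk _ w) = 0) :
    Ideal.Quotient.mk (Ideal.span {g}) u = 0 ∧ Ideal.Quotient.mk (Ideal.span {f}) w = 0 := by
  have hinj : Function.Injective (Int.castRingHom ℚ) := fun a b hab => Int.cast_injective hab
  rw [psi_mk, Ideal.Quotient.eq_zero_iff_mem, Ideal.mem_span_singleton] at h
  obtain ⟨c, hc⟩ := h
  have hgu : g ∣ u := by
    rw [← Polynomial.map_dvd_map (Int.castRingHom ℚ) hinj hg]
    have hd : (g.map (Int.castRingHom ℚ)) ∣ (u.map (Int.castRingHom ℚ)) * (f.map (Int.castRingHom ℚ)) := by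
      have he : u * f = g * (f * c - w) := by linear_combination hc
      rw [← Polynomial.map_mul, he, Polynomial.map_mul]
      exact Dvd.intro _ rfl
    exact (hco.symm.dvd_of_dvd_mul_right hd)
  have hfw : f ∣ w := by
    rw [← Polynomial.map_dvd_map (Int.castRingHom ℚ) hinj hf]
    have hd : (f.map (Int.castRingHom ℚ)) ∣ (w.map (Int.castRingHom ℚ)) * (g.map (Int.castRingHom ℚ)) := by
      have he : w * g = f * (g * c - u) := by linear_combination hc
      rw [← Polynomial.map_mul, he, Polynomial.map_mul]
      exact Dvd.intro _ rfl
    exact (hco.dvd_of_dvd_mul_right hd)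
  exact ⟨by rwa [Ideal.Quotient.eq_zero_iff_mem, Ideal.mem_span_singleton],
    by rwa [Ideal.Quotient.eq_zero_iff_mem, Ideal.mem_span_singleton]⟩

lemma det_sylvester_ne_zero (hf : f.Monic) (hg : g.Monic)
    (hco : IsCoprime (f.map (Int.castRingHom ℚ)) (g.map (Int.castRingHom ℚ))) :
    (sylvesterMatrix f g).det ≠ 0 := by
  intro h0
  obtain ⟨v, hv, hmul⟩ := (Matrix.exists_mulVec_eq_zero_iff).mpr h0
  set B := Bdom hf hg with hB
  set x := B.equivFun.symm v with hx
  have hvx : (⇑(B.repr x) : Fin (f.natDegree + g.natDegree) → ℤ) = v := by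
    funext j
    rw [← Module.Basis.equivFun_apply, hx, B.equivFun.apply_symm_apply]
  have hkey := LinearMap.toMatrix_mulVec_repr B (Bcod hf hg) ((psi f g).restrictScalars ℤ) x
  rw [toMatrix_psi hf hg, hvx, hmul] at hkey
  have h2 : (psi f g).restrictScalars ℤ x = 0 := by
    apply (Bcod hf hg).repr.map_eq_zero_iff.mp
    apply DFunLike.ext
    intro j
    simpa using (congrFun hkey j).symm
  have hx0 : x = 0 := by
    obtain ⟨u, hu⟩ := Ideal.Quotient.mk_surjective x.1
    obtain ⟨w, hw⟩ := Ideal.Quotient.mk_surjective x.2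
    have hxp : x = (Ideal.Quotient.mk _ u, Ideal.Quotient.mk _ w) := Prod.ext hu.symm hw.symm
    rw [hxp] at h2 ⊢
    obtain ⟨e1, e2⟩ := psi_eq_zero_iff hf hg hco u w h2
    exact Prod.ext e1 e2
  apply hv
  have h3 : B.equivFun x = v := B.equivFun.apply_symm_apply v
  rw [hx0] at h3
  rw [← h3]
  simp

lemma det_mk_one_mem_range (hf : f.Monic) (hg : g.Monic) :
    ∃ x, psi f g x =
      Ideal.Quotient.mk (Ideal.span {f * g}) (C ((sylvesterMatrix f g).det)) := by
  set S := sylvesterMatrix f g with hS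
  set B := Bdom hf hg with hB
  set Co := Bcod hf hg with hCo
  set w : Fin (f.natDegree + g.natDegree) → ℤ := ⇑(Co.repr (Ideal.Quotient.mk _ 1)) with hw
  set v := (S.adjugate).mulVec w with hvdef
  set x := B.equivFun.symm v with hx
  refine ⟨x, ?_⟩
  have hvx : ⇑(B.repr x) = v := by
    funext j
    rw [← Module.Basis.equivFun_apply, hx, B.equivFun.apply_symm_apply]
  have hkey := LinearMap.toMatrix_mulVec_repr B Co ((psi f g).restrictScalars ℤ) x
  rw [toMatrix_psi hf hg, hvx] at hkey
  have h2 : S *ᵥ v = S.det • w := by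
    rw [hvdef, Matrix.mulVec_mulVec, Matrix.mul_adjugate, Matrix.smul_mulVec,
      Matrix.one_mulVec]
  rw [h2] at hkey
  have h3 : (psi f g).restrictScalars ℤ x =
      S.det • Ideal.Quotient.mk (Ideal.span {f * g}) 1 := by
    apply Co.repr.injective
    apply DFunLike.ext
    intro j
    rw [_root_.map_smul]
    have hj := congrFun hkey j
    simp only [hw] at hj
    rw [← hj]
    simp
  have h4 : (psi f g) x = S.det • Ideal.Quotient.mk (Ideal.span {f * g}) 1 := h3
  rw [h4, int_smul_mk, mul_one]

lemma C_det_mem_sup (hf : f.Monic) (hg : g.Monic) :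
    C ((sylvesterMatrix f g).det) ∈ Ideal.span {f} ⊔ Ideal.span {g} := by
  obtain ⟨x, hx⟩ := det_mk_one_mem_range hf hg
  obtain ⟨u, hu⟩ := Ideal.Quotient.mk_surjective x.1
  obtain ⟨w, hw⟩ := Ideal.Quotient.mk_surjective x.2
  have hxp : x = (Ideal.Quotient.mk _ u, Ideal.Quotient.mk _ w) := Prod.ext hu.symm hw.symm
  rw [hxp, psi_mk] at hx
  have hsub : C ((sylvesterMatrix f g).det) - (u * f + w * g) ∈ Ideal.span {f * g} := by
    have h6 := (Ideal.Quotient.eq (I := Ideal.span {f * g})).mp hx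
    have h5 := (Ideal.span {f * g}).neg_mem h6
    simpa [neg_sub] using h5
  have hKf : Ideal.span {f * g} ≤ Ideal.span {f} :=
    Ideal.span_singleton_le_span_singleton.mpr ⟨g, rfl⟩
  have h1 : C ((sylvesterMatrix f g).det) =
      (C ((sylvesterMatrix f g).det) - (u * f + w * g)) + (u * f) + (w * g) := by ring
  rw [h1]
  refine add_mem (add_mem ?_ ?_) ?_
  · exact Submodule.mem_sup_left (hKf hsub)
  · exact Submodule.mem_sup_left (Ideal.mem_span_singleton.mpr ⟨u, mul_comm u f⟩)
  · exact Submodule.mem_sup_right (Ideal.mem_span_singleton.mpr ⟨w, mul_comm w g⟩)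

lemma psi_surjective_of_sup_eq_top (h : Ideal.span {f} ⊔ Ideal.span {g} = ⊤) :
    Function.Surjective (psi f g) := by
  have h1 : (1 : Polynomial ℤ) ∈ Ideal.span {f} ⊔ Ideal.span {g} := h.symm ▸ trivial
  obtain ⟨a, ha, b, hb, hab⟩ := Submodule.mem_sup.mp h1
  obtain ⟨u, rfl⟩ := Ideal.mem_span_singleton.mp ha
  obtain ⟨w, rfl⟩ := Ideal.mem_span_singleton.mp hb
  intro y
  obtain ⟨p, rfl⟩ := Ideal.Quotient.mk_surjective y
  refine ⟨(Ideal.Quotient.mk _ (u * p), Ideal.Quotient.mk _ (w * p)), ?_⟩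
  rw [psi_mk]
  congr 1
  linear_combination p * hab

lemma isUnit_det_of_psi_surjective (hf : f.Monic) (hg : g.Monic)
    (hsurj : Function.Surjective (psi f g)) : IsUnit (sylvesterMatrix f g).det := by
  set S := sylvesterMatrix f g with hS
  set B := Bdom hf hg with hB
  set Co := Bcod hf hg with hCo
  have hmv : ∀ w : Fin (f.natDegree + g.natDegree) → ℤ, ∃ v, S *ᵥ v = w := by
    intro w
    obtain ⟨x, hx⟩ := hsurj (Co.equivFun.symm w)
    refine ⟨⇑(B.repr x), ?_⟩
    have hkey := LinearMap.toMatrix_mulVec_repr B Co ((psi f g).restrictScalars ℤ) x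
    rw [toMatrix_psi hf hg] at hkey
    have : (psi f g).restrictScalars ℤ x = Co.equivFun.symm w := hx
    rw [this] at hkey
    funext j
    rw [congrFun hkey j, ← Module.Basis.equivFun_apply, Co.equivFun.apply_symm_apply]
  choose T hT using fun i => hmv (Pi.single i 1)
  have hST : S * (Matrix.of fun k i => T i k) = 1 := by
    ext j i
    rw [Matrix.mul_apply, Matrix.one_apply]
    have := congrFun (hT i) j
    rw [Matrix.mulVec, dotProduct] at this
    simpa [Pi.single_apply, eq_comm] using this
  exact IsUnit.of_mul_eq_one _ (by rw [← Matrix.det_mul, hST, Matrix.det_one])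

lemma iso_of_isUnit_det (hf : f.Monic) (hg : g.Monic)
    (h : IsUnit (sylvesterMatrix f g).det) :
    Nonempty ((Polynomial ℤ ⧸ Ideal.span {f * g}) ≃ₗ[Polynomial ℤ]
        (Polynomial ℤ ⧸ Ideal.span {f}) × (Polynomial ℤ ⧸ Ideal.span {g})) := by
  set S := sylvesterMatrix f g with hS
  set B := Bdom hf hg with hB
  set Co := Bcod hf hg with hCo
  have hInv : Invertible S := S.invertibleOfIsUnitDet h
  have htl : Matrix.toLin B Co S = (psi f g).restrictScalars ℤ := by
    rw [hS, ← toMatrix_psi hf hg, Matrix.toLin_toMatrix]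
  have hbij : Function.Bijective ((psi f g).restrictScalars ℤ) := by
    rw [← htl]
    constructor
    · intro a b hab
      have := congrArg (Matrix.toLin Co B (⅟S)) hab
      rwa [← LinearMap.comp_apply, ← LinearMap.comp_apply, ← Matrix.toLin_mul,
        invOf_mul_self, Matrix.toLin_one, LinearMap.id_apply, LinearMap.id_apply] at this
    · intro y
      refine ⟨Matrix.toLin Co B (⅟S) y, ?_⟩
      rw [← LinearMap.comp_apply, ← Matrix.toLin_mul, mul_invOf_self,
        Matrix.toLin_one, LinearMap.id_apply]
  have hbij' : Function.Bijective (psi f g) := hbij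
  exact ⟨(LinearEquiv.ofBijective (psi f g) hbij').symm.trans
    (LinearEquiv.prodComm (Polynomial ℤ) _ _)⟩

section prodQuot
variable {R M₁ M₂ : Type*} [Ring R] [AddCommGroup M₁] [AddCommGroup M₂]
  [Module R M₁] [Module R M₂]

/-- quotient of a product by a product submodule. -/
noncomputable def prodQuotEquiv (p : Submodule R M₁) (q : Submodule R M₂) :
    ((M₁ × M₂) ⧸ (p.prod q)) ≃ₗ[R] (M₁ ⧸ p) × (M₂ ⧸ q) := by
  refine LinearEquiv.ofBijective ((p.prod q).liftQ (p.mkQ.prodMap q.mkQ) ?_) ⟨?_, ?_⟩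
  · rw [LinearMap.ker_prodMap, Submodule.ker_mkQ, Submodule.ker_mkQ]
  · rw [← LinearMap.ker_eq_bot]
    apply Submodule.ker_liftQ_eq_bot
    rw [LinearMap.ker_prodMap, Submodule.ker_mkQ, Submodule.ker_mkQ]
  · intro y
    obtain ⟨a, ha⟩ := p.mkQ_surjective y.1
    obtain ⟨b, hb⟩ := q.mkQ_surjective y.2
    exact ⟨Submodule.Quotient.mk (a, b), Prod.ext ha hb⟩

lemma smul_prod_submodule (I : Ideal R) (p : Submodule R M₁) (q : Submodule R M₂) :
    I • (p.prod q) = (I • p).prod (I • q) := by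
  apply le_antisymm
  · apply Submodule.smul_le.2
    intro r hr z hz
    exact ⟨Submodule.smul_mem_smul hr hz.1, Submodule.smul_mem_smul hr hz.2⟩
  · intro z hz
    obtain ⟨h1, h2⟩ := hz
    have e1 : z = (z.1, 0) + (0, z.2) := by ext <;> simp
    rw [e1]
    apply Submodule.add_mem
    · have : ((z.1, 0) : M₁ × M₂) ∈ Submodule.map (LinearMap.inl R M₁ M₂) (I • p) :=
        ⟨z.1, h1, rfl⟩
      rw [Submodule.map_smul''] at this
      refine (smul_mono_right (α := Submodule R (M₁ × M₂)) I ?_) this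
      rintro _ ⟨m, hm, rfl⟩
      exact ⟨hm, q.zero_mem⟩
    · have : ((0, z.2) : M₁ × M₂) ∈ Submodule.map (LinearMap.inr R M₁ M₂) (I • q) :=
        ⟨z.2, h2, rfl⟩
      rw [Submodule.map_smul''] at this
      refine (smul_mono_right (α := Submodule R (M₁ × M₂)) I ?_) this
      rintro _ ⟨m, hm, rfl⟩
      exact ⟨p.zero_mem, hm⟩

end prodQuot

lemma ideal_smul_top (I J : Ideal (Polynomial ℤ)) :
    I • (⊤ : Submodule (Polynomial ℤ) (Polynomial ℤ ⧸ J)) = Submodule.map J.mkQ I := by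
  have h1 : (⊤ : Submodule (Polynomial ℤ) (Polynomial ℤ ⧸ J)) =
      Submodule.map J.mkQ ⊤ := by rw [Submodule.map_top, Submodule.range_mkQ]
  rw [h1, ← Submodule.map_smul'']
  congr 1
  apply le_antisymm
  · apply Submodule.smul_le.2
    intro r hr x _
    exact I.mul_mem_right x hr
  · intro x hx
    have : x = x • (1 : Polynomial ℤ) := by simp
    rw [this]
    exact Submodule.smul_mem_smul hx trivial

/-- quotient of `ℤ[X]⧸J` by `I•⊤` is `ℤ[X]⧸(J ⊔ I)`. -/
noncomputable def quotSmulTopEquiv (I J : Ideal (Polynomial ℤ)) :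
    ((Polynomial ℤ ⧸ J) ⧸
        (I • (⊤ : Submodule (Polynomial ℤ) (Polynomial ℤ ⧸ J)))) ≃ₗ[Polynomial ℤ]
      (Polynomial ℤ ⧸ (J ⊔ I)) :=
  (Submodule.quotEquivOfEq _ _ (ideal_smul_top I J)).trans
    (Submodule.quotientQuotientEquivQuotientSup J I)

lemma no_C_torsion (hf : f.Monic) {d : ℤ} (hd : d ≠ 0)
    (y : Polynomial ℤ ⧸ Ideal.span {f}) (h : (C d) • y = 0) : y = 0 := by
  have hinj : Function.Injective (Int.castRingHom ℚ) := fun a b hab => Int.cast_injective hab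
  obtain ⟨p, rfl⟩ := Ideal.Quotient.mk_surjective y
  have h1 : (C d) • Ideal.Quotient.mk (Ideal.span {f}) p =
      Ideal.Quotient.mk (Ideal.span {f}) (C d * p) := rfl
  rw [h1, Ideal.Quotient.eq_zero_iff_mem, Ideal.mem_span_singleton] at h
  rw [Ideal.Quotient.eq_zero_iff_mem, Ideal.mem_span_singleton]
  rw [← Polynomial.map_dvd_map (Int.castRingHom ℚ) hinj hf]
  have h2 : (f.map (Int.castRingHom ℚ)) ∣ C (d : ℚ) * (p.map (Int.castRingHom ℚ)) := by
    obtain ⟨c, hc⟩ := h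
    refine ⟨c.map (Int.castRingHom ℚ), ?_⟩
    have := congrArg (Polynomial.map (Int.castRingHom ℚ)) hc
    simpa [Polynomial.map_mul] using this
  obtain ⟨c, hc⟩ := h2
  have hdQ : (d : ℚ) ≠ 0 := by exact_mod_cast hd
  refine ⟨C ((d : ℚ)⁻¹) * c, ?_⟩
  have hmult : C ((d : ℚ)⁻¹) * C (d : ℚ) = 1 := by
    rw [← C_mul, inv_mul_cancel₀ hdQ, C_1]
  linear_combination C ((d : ℚ)⁻¹) * hc - (p.map (Int.castRingHom ℚ)) * hmult

lemma sup_eq_top_of_iso (hf : f.Monic) (hg : g.Monic)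
    (hco : IsCoprime (f.map (Int.castRingHom ℚ)) (g.map (Int.castRingHom ℚ)))
    (e : (Polynomial ℤ ⧸ Ideal.span {f * g}) ≃ₗ[Polynomial ℤ]
        (Polynomial ℤ ⧸ Ideal.span {f}) × (Polynomial ℤ ⧸ Ideal.span {g})) :
    Ideal.span {f} ⊔ Ideal.span {g} = ⊤ := by
  set I := Ideal.span {f} with hI
  set J := Ideal.span {g} with hJ
  set K := Ideal.span {f * g} with hK
  have hmap : (I • (⊤ : Submodule (Polynomial ℤ) (Polynomial ℤ ⧸ K))).map
      e.toLinearMap = I • ⊤ := by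
    rw [Submodule.map_smul'', Submodule.map_top, LinearEquiv.range]
  let E0 := Submodule.Quotient.equiv _ _ e hmap
  let c1 := quotSmulTopEquiv I K
  have hKI : K ⊔ I = I := sup_eq_right.mpr
    (Ideal.span_singleton_le_span_singleton.mpr ⟨g, rfl⟩)
  have hprod : (I • (⊤ : Submodule (Polynomial ℤ)
        ((Polynomial ℤ ⧸ I) × (Polynomial ℤ ⧸ J)))) =
      (I • (⊤ : Submodule (Polynomial ℤ) (Polynomial ℤ ⧸ I))).prod
        (I • (⊤ : Submodule (Polynomial ℤ) (Polynomial ℤ ⧸ J))) := by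
    rw [← smul_prod_submodule]
    congr 1
    exact Submodule.prod_top.symm
  let c2 := (Submodule.quotEquivOfEq _ _ hprod).trans (prodQuotEquiv _ _)
  let c3 := quotSmulTopEquiv I J
  let c4 := quotSmulTopEquiv I I
  have hII : I ⊔ I = I := sup_idem I
  let E' := ((c1.trans (Submodule.quotEquivOfEq _ _ hKI)).symm.trans E0).trans
    (c2.trans (LinearEquiv.prodCongr (c4.trans (Submodule.quotEquivOfEq _ _ hII)) c3))
  set d := (sylvesterMatrix f g).det with hd'
  have hd : d ≠ 0 := det_sylvester_ne_zero hf hg hco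
  have hCd : C d ∈ J ⊔ I := by
    have := C_det_mem_sup hf hg
    rwa [sup_comm] at this
  have hkill : ∀ q : Polynomial ℤ ⧸ (J ⊔ I), (C d) • q = 0 := by
    intro q
    obtain ⟨p, rfl⟩ := Ideal.Quotient.mk_surjective q
    have h5 : (C d) • Ideal.Quotient.mk (J ⊔ I) p = Ideal.Quotient.mk _ (C d * p) := rfl
    rw [h5, Ideal.Quotient.eq_zero_iff_mem]
    exact (J ⊔ I).mul_mem_right p hCd
  have hq0 : ∀ q : Polynomial ℤ ⧸ (J ⊔ I), q = 0 := by
    intro q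
    have h1 : (C d) • (E'.symm ((0 : Polynomial ℤ ⧸ I), q)) = 0 := by
      rw [← _root_.map_smul, Prod.smul_mk, smul_zero, hkill q, Prod.mk_zero_zero, E'.symm.map_zero]
    have h2 := no_C_torsion hf hd _ h1
    have h3 := congrArg E' h2
    rw [LinearEquiv.apply_symm_apply, E'.map_zero] at h3
    exact congrArg Prod.snd h3
  have h1 : (1 : Polynomial ℤ) ∈ J ⊔ I := by
    have := hq0 (Ideal.Quotient.mk _ 1)
    rwa [Ideal.Quotient.eq_zero_iff_mem] at this
  rw [sup_comm]
  exact (Ideal.eq_top_iff_one _).mpr h1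

end SylTest
end

/-- Theorem 5.1 (a): for monic `f, g ∈ ℤ[t]` which are coprime in `ℚ[t]`, the
`ℤ[t]`-modules `ℤ[t]/(fg)` and `ℤ[t]/(f) ⊕ ℤ[t]/(g)` are isomorphic if and only if
`|Res(f,g)| = 1`. -/
theorem quotient_prod_iso_iff_resultant (f g : Polynomial ℤ) (hf : f.Monic) (hg : g.Monic)
    (hco : IsCoprime (f.map (Int.castRingHom ℚ)) (g.map (Int.castRingHom ℚ))) :
    Nonempty ((Polynomial ℤ ⧸ Ideal.span {f * g}) ≃ₗ[Polynomial ℤ]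
        (Polynomial ℤ ⧸ Ideal.span {f}) × (Polynomial ℤ ⧸ Ideal.span {g})) ↔
      (res f g).natAbs = 1 := by
  constructor
  · rintro ⟨e⟩
    have hsup := SylTest.sup_eq_top_of_iso hf hg hco e
    have hsurj := SylTest.psi_surjective_of_sup_eq_top hsup
    exact Int.isUnit_iff_natAbs_eq.mp (SylTest.isUnit_det_of_psi_surjective hf hg hsurj)
  · intro h
    exact SylTest.iso_of_isUnit_det hf hg (Int.isUnit_iff_natAbs_eq.mpr h)
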